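/- Let a ∈ Δ_n^* and b ∈ Δ_m^* and let r ≥ 1. Then Π_{a,b}(r) is a nonempty compact subset of ℝ^{n×m}, and for every cost matrix C ∈ ℝ^{n×m} the infimum LOT_r := inf_{P ∈ Π_{a,b}(r)} ⟨C, P⟩ is attained at some P ∈ Π_{a,b}(r). -/

import Mathlib

open Matrix Finset Real
open scoped RealInnerProductSpace

noncomputable section

/-- Real matrices indexed by `Fin n × Fin m`. -/
abbrev Mat (n m : ℕ) : Type := Matrix (Fin n) (Fin m) ℝ

/-- Triples `(Q, R, g)` as in the low-rank OT factorization. -/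
abbrev LRTriple (n m r : ℕ) : Type := Mat n r × Mat m r × (Fin r → ℝ)

/-- Pairs `(Q, R)` (fixed middle marginal `g`). -/
abbrev LRPair (n m r : ℕ) : Type := Mat n r × Mat m r

/-- The interior of the probability simplex Δ_n^*: strictly positive entries summing to 1. -/
def posSimplex (n : ℕ) : Set (Fin n → ℝ) := {a | (∀ i, 0 < a i) ∧ ∑ i, a i = 1}

/-- Frobenius inner product ⟨C, P⟩ = Σ_{ij} C_ij P_ij. -/
def frobInner {n m : ℕ} (C P : Mat n m) : ℝ := ∑ i, ∑ j, C i j * P i j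

/-- Entropy H(P) = −Σ_{ij} P_ij (log P_ij − 1) (with 0 log 0 = 0, as `Real.log 0 = 0`). -/
def matH {n m : ℕ} (P : Mat n m) : ℝ := -∑ i, ∑ j, P i j * (Real.log (P i j) - 1)

/-- Entropy of a vector. -/
def vecH {r : ℕ} (g : Fin r → ℝ) : ℝ := -∑ i, g i * (Real.log (g i) - 1)

/-- Kullback–Leibler divergence KL(P,Q) = Σ_{ij} P_ij (log(P_ij/Q_ij) − 1). -/
def matKL {n m : ℕ} (P Q : Mat n m) : ℝ := ∑ i, ∑ j, P i j * (Real.log (P i j / Q i j) - 1)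

/-- Kullback–Leibler divergence of vectors. -/
def vecKL {r : ℕ} (p q : Fin r → ℝ) : ℝ := ∑ i, p i * (Real.log (p i / q i) - 1)

/-- KL divergence on triples, summing over the three components. -/
def tripleKL {n m r : ℕ} (x y : LRTriple n m r) : ℝ :=
  matKL x.1 y.1 + matKL x.2.1 y.2.1 + vecKL x.2.2 y.2.2

/-- KL divergence on pairs, summing over the two components. -/
def pairKL {n m r : ℕ} (x y : LRPair n m r) : ℝ := matKL x.1 y.1 + matKL x.2 y.2

/-- Euclidean inner product on triples. -/
def tripleInner {n m r : ℕ} (x y : LRTriple n m r) : ℝ :=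
  frobInner x.1 y.1 + frobInner x.2.1 y.2.1 + ∑ i, x.2.2 i * y.2.2 i

/-- Euclidean inner product on pairs. -/
def pairInner {n m r : ℕ} (x y : LRPair n m r) : ℝ := frobInner x.1 y.1 + frobInner x.2 y.2

/-- Squared Euclidean norm of a triple (Frobenius on matrix blocks). -/
def tripleNormSq {n m r : ℕ} (x : LRTriple n m r) : ℝ :=
  (∑ i, ∑ j, (x.1 i j) ^ 2) + (∑ i, ∑ j, (x.2.1 i j) ^ 2) + ∑ i, (x.2.2 i) ^ 2

/-- Squared Euclidean norm of a pair (Frobenius on matrix blocks). -/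
def pairNormSq {n m r : ℕ} (x : LRPair n m r) : ℝ :=
  (∑ i, ∑ j, (x.1 i j) ^ 2) + (∑ i, ∑ j, (x.2 i j) ^ 2)

/-- The transport polytope Π_{a,b} of couplings with marginals `a` and `b`. -/
def couplings {n m : ℕ} (a : Fin n → ℝ) (b : Fin m → ℝ) : Set (Mat n m) :=
  {P | (∀ i j, 0 ≤ P i j) ∧ (∀ i, ∑ j, P i j = a i) ∧ (∀ j, ∑ i, P i j = b j)}

/-- The nonnegative rank: smallest `q` such that `M` is a sum of `q` nonnegative
rank-one matrices. -/
def nonnegRank {n m : ℕ} (M : Mat n m) : ℕ :=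
  sInf {q : ℕ | ∃ f : Fin q → Mat n m,
    (∀ i, (f i).rank = 1 ∧ ∀ k l, 0 ≤ f i k l) ∧ M = ∑ i, f i}

/-- Π_{a,b}(r): couplings with nonnegative rank at most `r`. -/
def couplingsRank {n m : ℕ} (a : Fin n → ℝ) (b : Fin m → ℝ) (r : ℕ) : Set (Mat n m) :=
  {P | P ∈ couplings a b ∧ nonnegRank P ≤ r}

/-- 𝒞₁(a,b,r): `Q, R` nonnegative with row sums `a`, `b`, and `g > 0`. -/
def C1set {n m : ℕ} (a : Fin n → ℝ) (b : Fin m → ℝ) (r : ℕ) : Set (LRTriple n m r) :=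
  {x | (∀ i j, 0 ≤ x.1 i j) ∧ (∀ i j, 0 ≤ x.2.1 i j) ∧ (∀ i, 0 < x.2.2 i) ∧
    (∀ i, ∑ j, x.1 i j = a i) ∧ (∀ i, ∑ j, x.2.1 i j = b i)}

/-- The closure of 𝒞₁(a,b,r): as 𝒞₁ but only `g ≥ 0`. -/
def C1barSet {n m : ℕ} (a : Fin n → ℝ) (b : Fin m → ℝ) (r : ℕ) : Set (LRTriple n m r) :=
  {x | (∀ i j, 0 ≤ x.1 i j) ∧ (∀ i j, 0 ≤ x.2.1 i j) ∧ (∀ i, 0 ≤ x.2.2 i) ∧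
    (∀ i, ∑ j, x.1 i j = a i) ∧ (∀ i, ∑ j, x.2.1 i j = b i)}

/-- 𝒞₁(a,b,r,α): as 𝒞₁ but with the lower bound `g ≥ α`. -/
def C1setAlpha {n m : ℕ} (a : Fin n → ℝ) (b : Fin m → ℝ) (r : ℕ) (α : ℝ) :
    Set (LRTriple n m r) :=
  {x | (∀ i j, 0 ≤ x.1 i j) ∧ (∀ i j, 0 ≤ x.2.1 i j) ∧ (∀ i, α ≤ x.2.2 i) ∧
    (∀ i, ∑ j, x.1 i j = a i) ∧ (∀ i, ∑ j, x.2.1 i j = b i)}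

/-- 𝒞₂(r): `Q, R, g` nonnegative with both column sums equal to `g`. -/
def C2set {n m : ℕ} (r : ℕ) : Set (LRTriple n m r) :=
  {x | (∀ i j, 0 ≤ x.1 i j) ∧ (∀ i j, 0 ≤ x.2.1 i j) ∧ (∀ i, 0 ≤ x.2.2 i) ∧
    (∀ j, ∑ i, x.1 i j = x.2.2 j) ∧ (∀ j, ∑ i, x.2.1 i j = x.2.2 j)}

/-- 𝒞(a,b,r) = 𝒞₁(a,b,r) ∩ 𝒞₂(r). -/
def Cset {n m : ℕ} (a : Fin n → ℝ) (b : Fin m → ℝ) (r : ℕ) : Set (LRTriple n m r) :=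
  C1set a b r ∩ C2set r

/-- 𝒞(a,b,r,α) = 𝒞₁(a,b,r,α) ∩ 𝒞₂(r). -/
def CsetAlpha {n m : ℕ} (a : Fin n → ℝ) (b : Fin m → ℝ) (r : ℕ) (α : ℝ) :
    Set (LRTriple n m r) :=
  C1setAlpha a b r α ∩ C2set r

/-- F_ε(Q,R,g) = ⟨C, Q Diag(1/g) Rᵀ⟩ − ε H((Q,R,g)). -/
def Fobj {n m r : ℕ} (C : Mat n m) (ε : ℝ) (x : LRTriple n m r) : ℝ :=
  frobInner C (x.1 * Matrix.diagonal (fun i => (x.2.2 i)⁻¹) * x.2.1ᵀ) -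
    ε * (matH x.1 + matH x.2.1 + vecH x.2.2)

/-- LOT_{r,ε} = inf of F_ε over 𝒞(a,b,r). -/
def LOTre {n m : ℕ} (a : Fin n → ℝ) (b : Fin m → ℝ) (C : Mat n m) (ε : ℝ) (r : ℕ) : ℝ :=
  sInf (Fobj C ε '' Cset a b r)

/-- LOT_{r,ε,α} = inf of F_ε over 𝒞(a,b,r,α). -/
def LOTreAlpha {n m : ℕ} (a : Fin n → ℝ) (b : Fin m → ℝ) (C : Mat n m) (ε : ℝ) (r : ℕ)
    (α : ℝ) : ℝ :=
  sInf (Fobj C ε '' CsetAlpha a b r α)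

/-- Spectral norm (ℓ²→ℓ² operator norm) of a matrix. -/
def specNorm {n m : ℕ} (C : Mat n m) : ℝ :=
  ‖LinearMap.toContinuousLinearMap (Matrix.toEuclideanLin C)‖

/-- The gradient ∇F_ε(Q,R,g) =
(C R Diag(1/g) + ε log Q, Cᵀ Q Diag(1/g) + ε log R, −𝒟(Qᵀ C R)/g² + ε log g). -/
def gradF {n m r : ℕ} (C : Mat n m) (ε : ℝ) (x : LRTriple n m r) : LRTriple n m r :=
  (Matrix.of fun i k => (C * x.2.1) i k * (x.2.2 k)⁻¹ + ε * Real.log (x.1 i k),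
   Matrix.of fun j k => (Cᵀ * x.1) j k * (x.2.2 k)⁻¹ + ε * Real.log (x.2.1 j k),
   fun k => -((x.1ᵀ * C * x.2.1) k k) / (x.2.2 k) ^ 2 + ε * Real.log (x.2.2 k))

/-- Entrywise logarithm of a triple. -/
def logTriple {n m r : ℕ} (x : LRTriple n m r) : LRTriple n m r :=
  (Matrix.of fun i k => Real.log (x.1 i k), Matrix.of fun j k => Real.log (x.2.1 j k),
   fun k => Real.log (x.2.2 k))

/-- The feasible set Π_{a,g} × Π_{b,g}. -/
def pairFeasible {n m r : ℕ} (a : Fin n → ℝ) (b : Fin m → ℝ) (g : Fin r → ℝ) :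
    Set (LRPair n m r) :=
  {u | u.1 ∈ couplings a g ∧ u.2 ∈ couplings b g}

/-- f_ε(Q,R) = ⟨C, Q Diag(1/g) Rᵀ⟩ − ε (H(Q) + H(R)) for fixed `g`. -/
def fobj {n m r : ℕ} (C : Mat n m) (g : Fin r → ℝ) (ε : ℝ) (x : LRPair n m r) : ℝ :=
  frobInner C (x.1 * Matrix.diagonal (fun i => (g i)⁻¹) * x.2ᵀ) - ε * (matH x.1 + matH x.2)

/-- LOT_{r,g,ε} = inf of f_ε over Π_{a,g} × Π_{b,g}. -/
def LOTfix {n m r : ℕ} (a : Fin n → ℝ) (b : Fin m → ℝ) (g : Fin r → ℝ) (C : Mat n m)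
    (ε : ℝ) : ℝ :=
  sInf (fobj C g ε '' pairFeasible a b g)

/-- The gradient ∇f_ε(Q,R) = (C R Diag(1/g) + ε log Q, Cᵀ Q Diag(1/g) + ε log R). -/
def gradf {n m r : ℕ} (C : Mat n m) (g : Fin r → ℝ) (ε : ℝ) (x : LRPair n m r) :
    LRPair n m r :=
  (Matrix.of fun i k => (C * x.2) i k * (g k)⁻¹ + ε * Real.log (x.1 i k),
   Matrix.of fun j k => (Cᵀ * x.1) j k * (g k)⁻¹ + ε * Real.log (x.2 j k))

/-- Entrywise logarithm of a pair. -/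
def logPair {n m r : ℕ} (x : LRPair n m r) : LRPair n m r :=
  (Matrix.of fun i k => Real.log (x.1 i k), Matrix.of fun j k => Real.log (x.2 j k))

end


section Helpers

open Matrix Finset

lemma myrank_le_one {n m : ℕ} (u : Fin n → ℝ) (v : Fin m → ℝ) :
    (Matrix.vecMulVec u v).rank ≤ 1 := by
  rw [Matrix.vecMulVec_eq (Fin 1)]
  refine le_trans (Matrix.rank_mul_le_left _ _) ?_
  exact le_trans (Matrix.rank_le_card_width _) (by simp)

lemma myrank_zero {n m : ℕ} {A : Mat n m} (h : A.rank = 0) : A = 0 := by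
  have hb : LinearMap.range A.mulVecLin = ⊥ := Submodule.finrank_eq_zero.mp h
  ext k l
  have h1 : A.mulVec (Pi.single l 1) ∈ LinearMap.range A.mulVecLin :=
    ⟨Pi.single l 1, rfl⟩
  rw [hb, Submodule.mem_bot] at h1
  have := congrFun h1 k
  rw [Matrix.mulVec_single] at this
  simpa using this

lemma myrank_eq_one {n m : ℕ} {u : Fin n → ℝ} {v : Fin m → ℝ}
    (h : Matrix.vecMulVec u v ≠ 0) : (Matrix.vecMulVec u v).rank = 1 := by
  refine le_antisymm (myrank_le_one u v) ?_
  exact Nat.one_le_iff_ne_zero.2 fun h0 => h (myrank_zero h0)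

lemma rank_one_factor {n m : ℕ} {A : Mat n m} (h : A.rank = 1) :
    ∃ (x : Fin n → ℝ) (y : Fin m → ℝ), ∀ k l, A k l = x k * y l := by
  rw [Matrix.rank] at h
  obtain ⟨v0, -, hv0⟩ := (finrank_eq_one_iff' ).mp h
  refine ⟨fun k => (v0 : Fin n → ℝ) k,
    fun l => Classical.choose (hv0 ⟨A.mulVec (Pi.single l 1), ⟨Pi.single l 1, rfl⟩⟩),
    fun k l => ?_⟩
  have hc := Classical.choose_spec (hv0 ⟨A.mulVec (Pi.single l 1), ⟨Pi.single l 1, rfl⟩⟩)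
  have := congrFun (congrArg Subtype.val hc) k
  simp only [Submodule.coe_smul, Pi.smul_apply, smul_eq_mul] at this
  have h2 : (A *ᵥ Pi.single l 1) k = A k l := by
    rw [Matrix.mulVec_single]; simp
  rw [h2] at this
  simp only []
  rw [← this]; ring

lemma nonneg_factor {n m : ℕ} [Nonempty (Fin n)] [Nonempty (Fin m)] {A : Mat n m}
    (hA : ∀ k l, 0 ≤ A k l) (hA1 : ∀ k l, A k l ≤ 1)
    (x : Fin n → ℝ) (y : Fin m → ℝ) (hxy : ∀ k l, A k l = x k * y l) :
    ∃ (u : Fin n → ℝ) (v : Fin m → ℝ), (∀ k, u k ∈ Set.Icc (0:ℝ) 1) ∧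
      (∀ l, v l ∈ Set.Icc (0:ℝ) 1) ∧ ∀ k l, A k l = u k * v l := by
  obtain ⟨p, -, hp⟩ := Finset.exists_max_image (univ ×ˢ univ)
    (fun p : Fin n × Fin m => A p.1 p.2) ⟨(Classical.arbitrary _, Classical.arbitrary _), by simp⟩
  have hpmax : ∀ k l, A k l ≤ A p.1 p.2 := fun k l => hp (k, l) (by simp)
  rcases eq_or_lt_of_le (hA p.1 p.2) with h0 | h0
  · refine ⟨0, 0, by simp, by simp, fun k l => ?_⟩
    have := hpmax k l
    have := hA k l
    simp only [Pi.zero_apply, mul_zero]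
    linarith
  · set c := A p.1 p.2 with hc
    refine ⟨fun k => A k p.2 / c, fun l => A p.1 l, fun k => ⟨div_nonneg (hA _ _) h0.le,
      div_le_one_of_le₀ (hpmax k p.2) h0.le⟩, fun l => ⟨hA _ _, le_trans (hpmax p.1 l) (hA1 _ _)⟩,
      fun k l => ?_⟩
    have hxne : x p.1 * y p.2 ≠ 0 := by rw [← hxy]; exact h0.ne'
    have hx : x p.1 ≠ 0 := fun h => hxne (by simp [h])
    have hy : y p.2 ≠ 0 := fun h => hxne (by simp [h])
    show A k l = A k p.2 / c * A p.1 l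
    rw [div_mul_eq_mul_div, eq_comm, div_eq_iff h0.ne', hxy k p.2, hxy p.1 l, hc,
      hxy p.1 p.2, hxy k l]
    ring

lemma exists_decomp {n m : ℕ} {ι : Type*} [Fintype ι]
    (u : ι → Fin n → ℝ) (v : ι → Fin m → ℝ)
    (hu : ∀ i k, 0 ≤ u i k) (hv : ∀ i l, 0 ≤ v i l) :
    ∃ q ≤ Fintype.card ι, ∃ f : Fin q → Mat n m,
      (∀ i, (f i).rank = 1 ∧ ∀ k l, 0 ≤ f i k l) ∧
      (∑ i, Matrix.vecMulVec (u i) (v i)) = ∑ i, f i := by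
  classical
  set s : Finset ι := univ.filter (fun i => Matrix.vecMulVec (u i) (v i) ≠ 0) with hs
  refine ⟨s.card, le_trans (Finset.card_filter_le _ _) (by simp),
    fun j => Matrix.vecMulVec (u (s.equivFin.symm j : ι)) (v (s.equivFin.symm j : ι)),
    fun j => ⟨?_, fun k l => mul_nonneg (hu _ _) (hv _ _)⟩, ?_⟩
  · have hmem := (s.equivFin.symm j).2
    have hne : Matrix.vecMulVec (u (s.equivFin.symm j : ι)) (v (s.equivFin.symm j : ι)) ≠ 0 :=
      (Finset.mem_filter.mp hmem).2
    exact myrank_eq_one hne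
  · have h1 : ∀ i : ι, i ∉ s → Matrix.vecMulVec (u i) (v i) = 0 := by
      intro i hi
      by_contra hne
      exact hi (by simp [hs, hne])
    calc ∑ i, Matrix.vecMulVec (u i) (v i)
        = ∑ i ∈ s, Matrix.vecMulVec (u i) (v i) :=
          (Finset.sum_subset (Finset.subset_univ s) (fun i _ hi => h1 i hi)).symm
      _ = ∑ i : s, Matrix.vecMulVec (u (i : ι)) (v (i : ι)) := (Finset.sum_coe_sort s _).symm
      _ = _ := (Equiv.sum_comp s.equivFin.symm _).symm

lemma single_nonneg' {ι : Type*} [DecidableEq ι] (i : ι) {x : ℝ} (hx : 0 ≤ x) (j : ι) :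
    0 ≤ Pi.single (M := fun _ => ℝ) i x j := by
  rw [Pi.single_apply]
  split
  · exact hx
  · exact le_refl 0

lemma P_eq_sum_singles {n m : ℕ} (P : Mat n m) :
    P = ∑ p : Fin n × Fin m,
      Matrix.vecMulVec (Pi.single p.1 (P p.1 p.2)) (Pi.single p.2 1) := by
  ext k l
  rw [Matrix.sum_apply]
  simp only [Matrix.vecMulVec_apply, Pi.single_apply]
  rw [Fintype.sum_prod_type]
  simp [Finset.sum_ite_eq, ite_and]

lemma isClosed_couplings {n m : ℕ} (a : Fin n → ℝ) (b : Fin m → ℝ) :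
    IsClosed (couplings a b) := by
  have hc : ∀ (i : Fin n) (j : Fin m), Continuous fun P : Mat n m => P i j :=
    fun i j => (continuous_apply j).comp (continuous_apply i)
  have he : couplings a b = (⋂ i, ⋂ j, {P : Mat n m | 0 ≤ P i j}) ∩
      ((⋂ i, {P : Mat n m | ∑ j, P i j = a i}) ∩ (⋂ j, {P : Mat n m | ∑ i, P i j = b j})) := by
    ext P
    simp only [couplings, Set.mem_setOf_eq, Set.mem_inter_iff, Set.mem_iInter]
  rw [he]
  exact ((isClosed_iInter fun i => isClosed_iInter fun j =>
      isClosed_le continuous_const (hc i j))).inter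
    (((isClosed_iInter fun i => isClosed_eq (continuous_finset_sum _ fun j _ => hc i j)
        continuous_const)).inter
      (isClosed_iInter fun j => isClosed_eq (continuous_finset_sum _ fun i _ => hc i j)
        continuous_const))

def phiMap {n m r : ℕ} (w : Fin r → (Fin n → ℝ) × (Fin m → ℝ)) : Mat n m :=
  ∑ i, Matrix.vecMulVec (w i).1 (w i).2

lemma continuous_phiMap {n m r : ℕ} :
    Continuous (phiMap (n := n) (m := m) (r := r)) := by
  apply continuous_pi; intro k; apply continuous_pi; intro l
  have : (fun w : Fin r → (Fin n → ℝ) × (Fin m → ℝ) => phiMap w k l) =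
      fun w => ∑ i, (w i).1 k * (w i).2 l := by
    funext w; rw [phiMap, Matrix.sum_apply]; simp [Matrix.vecMulVec_apply]
  rw [this]
  exact continuous_finset_sum _ fun i _ => by fun_prop

def cubeSet (n m r : ℕ) : Set (Fin r → (Fin n → ℝ) × (Fin m → ℝ)) :=
  Set.univ.pi fun _ => (Set.univ.pi fun _ => Set.Icc (0:ℝ) 1) ×ˢ
    (Set.univ.pi fun _ => Set.Icc (0:ℝ) 1)

lemma isCompact_cubeSet (n m r : ℕ) : IsCompact (cubeSet n m r) :=
  isCompact_univ_pi fun _ => ((isCompact_univ_pi fun _ => isCompact_Icc).prod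
    (isCompact_univ_pi fun _ => isCompact_Icc))

lemma continuous_frob {n m : ℕ} (C : Mat n m) :
    Continuous fun P : Mat n m => frobInner C P := by
  unfold frobInner
  exact continuous_finset_sum _ fun i _ => continuous_finset_sum _ fun j _ =>
    continuous_const.mul ((continuous_apply j).comp (continuous_apply i))

lemma mem_cubeSet_iff {n m r : ℕ} (w : Fin r → (Fin n → ℝ) × (Fin m → ℝ)) :
    w ∈ cubeSet n m r ↔ ∀ i, (∀ k, (w i).1 k ∈ Set.Icc (0:ℝ) 1) ∧
      (∀ l, (w i).2 l ∈ Set.Icc (0:ℝ) 1) := by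
  simp only [cubeSet, Set.mem_pi, Set.mem_univ, true_implies, Set.mem_prod]

/-- Key: `Π_{a,b}(r)` as intersection of the (closed) transport polytope with a compact image. -/
lemma couplingsRank_eq {n m : ℕ} (r : ℕ) (a : Fin n → ℝ) (b : Fin m → ℝ)
    [Nonempty (Fin n)] [Nonempty (Fin m)]
    (ha1 : ∀ i, 0 ≤ a i) (hasum : ∑ i, a i = 1) :
    couplingsRank a b r = couplings a b ∩ (phiMap '' cubeSet n m r) := by
  ext P
  constructor
  · rintro ⟨hPc, hPr⟩
    refine ⟨hPc, ?_⟩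
    obtain ⟨hPnn, hProw, hPcol⟩ := hPc
    -- the defining set of `nonnegRank P` is nonempty
    have hSne : {q : ℕ | ∃ f : Fin q → Mat n m,
        (∀ i, (f i).rank = 1 ∧ ∀ k l, 0 ≤ f i k l) ∧ P = ∑ i, f i}.Nonempty := by
      obtain ⟨q, -, f, hf, hsum⟩ := exists_decomp
        (fun p : Fin n × Fin m => Pi.single p.1 (P p.1 p.2))
        (fun p : Fin n × Fin m => Pi.single p.2 (1:ℝ))
        (fun p k => single_nonneg' p.1 (hPnn p.1 p.2) k)
        (fun p l => single_nonneg' p.2 zero_le_one l)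
      exact ⟨q, f, hf, (P_eq_sum_singles P).trans hsum⟩
    have hq0 : nonnegRank P ∈ {q : ℕ | ∃ f : Fin q → Mat n m,
        (∀ i, (f i).rank = 1 ∧ ∀ k l, 0 ≤ f i k l) ∧ P = ∑ i, f i} :=
      Nat.sInf_mem hSne
    set q0 := nonnegRank P with hq0def
    obtain ⟨f, hf, hPsum⟩ := hq0
    have hqr : q0 ≤ r := hPr
    -- entries of each `f i` are at most 1
    have hPle : ∀ k l, P k l ≤ 1 := by
      intro k l
      have h1 : P k l ≤ ∑ l', P k l' :=
        Finset.single_le_sum (fun l' _ => hPnn k l') (Finset.mem_univ l)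
      have h2 : a k ≤ ∑ i, a i :=
        Finset.single_le_sum (fun i _ => ha1 i) (Finset.mem_univ k)
      rw [hProw k] at h1
      rw [hasum] at h2
      linarith
    have hfle : ∀ i k l, f i k l ≤ 1 := by
      intro i k l
      have h1 : f i k l ≤ ∑ i', f i' k l :=
        Finset.single_le_sum (fun i' _ => (hf i').2 k l) (Finset.mem_univ i)
      have h2 : ∑ i', f i' k l = P k l := by
        rw [hPsum, Matrix.sum_apply]
      rw [h2] at h1
      exact h1.trans (hPle k l)
    have hfac : ∀ i, ∃ (u : Fin n → ℝ) (v : Fin m → ℝ),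
        (∀ k, u k ∈ Set.Icc (0:ℝ) 1) ∧ (∀ l, v l ∈ Set.Icc (0:ℝ) 1) ∧
        ∀ k l, f i k l = u k * v l := by
      intro i
      obtain ⟨x, y, hxy⟩ := rank_one_factor (hf i).1
      exact nonneg_factor (hf i).2 (hfle i) x y hxy
    choose u v hu hv huv using hfac
    refine ⟨fun i => if h : (i : ℕ) < q0 then (u ⟨i, h⟩, v ⟨i, h⟩) else (0, 0),
      (mem_cubeSet_iff _).mpr fun i => ?_, ?_⟩
    · by_cases h : (i : ℕ) < q0
      · rw [dif_pos h]
        exact ⟨hu _, hv _⟩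
      · rw [dif_neg h]
        exact ⟨fun k => by simp, fun l => by simp⟩
    · set w : Fin r → (Fin n → ℝ) × (Fin m → ℝ) :=
        fun i => if h : (i : ℕ) < q0 then (u ⟨i, h⟩, v ⟨i, h⟩) else (0, 0) with hw
      have hterm : ∀ i : Fin r, Matrix.vecMulVec (w i).1 (w i).2 =
          if h : (i : ℕ) < q0 then f ⟨i, h⟩ else 0 := by
        intro i
        by_cases h : (i : ℕ) < q0
        · ext k l
          rw [hw]
          simp only [dif_pos h, Matrix.vecMulVec_apply]
          exact (huv ⟨i, h⟩ k l).symm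
        · ext k l
          rw [hw]
          simp only [dif_neg h, Matrix.vecMulVec_apply]
          simp
      rw [phiMap]
      simp_rw [hterm]
      rw [hPsum]
      have h1 : ∑ j : Fin q0, f j =
          ∑ i ∈ Finset.univ.map (Fin.castLEEmb hqr),
            (if h : (i : ℕ) < q0 then f ⟨i, h⟩ else 0) := by
        rw [Finset.sum_map]
        refine Finset.sum_congr rfl fun j _ => ?_
        have hj : ((Fin.castLEEmb hqr j : Fin r) : ℕ) < q0 := by
          simpa using j.2
        have hje : (⟨((Fin.castLEEmb hqr j : Fin r) : ℕ), hj⟩ : Fin q0) = j :=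
          Fin.ext (by simp)
        simp only [dif_pos hj, hje]
      rw [h1]
      refine (Finset.sum_subset (Finset.subset_univ _) fun i _ hi => ?_).symm
      refine dif_neg fun hlt => hi ?_
      exact Finset.mem_map.mpr ⟨⟨(i : ℕ), hlt⟩, Finset.mem_univ _, Fin.ext (by simp)⟩
  · rintro ⟨hPc, w, hwK, hphw⟩
    refine ⟨hPc, ?_⟩
    rw [mem_cubeSet_iff] at hwK
    obtain ⟨q, hqr, f, hf, hsum⟩ := exists_decomp (fun i => (w i).1) (fun i => (w i).2)
      (fun i k => ((hwK i).1 k).1) (fun i l => ((hwK i).2 l).1)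
    refine le_trans (Nat.sInf_le ⟨f, hf, ?_⟩) (by simpa using hqr)
    rw [← hphw]
    exact hsum

end Helpers

/-- Π_{a,b}(r) is nonempty and compact, and for any cost matrix `C` the
infimum of `⟨C, ·⟩` over Π_{a,b}(r) is attained. -/
theorem couplingsRank_compact_and_min_attained {n m : ℕ} (r : ℕ) (hr : 1 ≤ r)
    (a : Fin n → ℝ) (ha : a ∈ posSimplex n)
    (b : Fin m → ℝ) (hb : b ∈ posSimplex m) :
    (couplingsRank a b r).Nonempty ∧ IsCompact (couplingsRank a b r) ∧
      ∀ C : Mat n m, ∃ P ∈ couplingsRank a b r,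
        ∀ P' ∈ couplingsRank a b r, frobInner C P ≤ frobInner C P' := by
  obtain ⟨hapos, hasum⟩ := ha
  obtain ⟨hbpos, hbsum⟩ := hb
  have hn : Nonempty (Fin n) := by
    by_contra h
    rw [not_nonempty_iff] at h
    rw [Finset.univ_eq_empty, Finset.sum_empty] at hasum
    exact zero_ne_one hasum
  have hm : Nonempty (Fin m) := by
    by_contra h
    rw [not_nonempty_iff] at h
    rw [Finset.univ_eq_empty, Finset.sum_empty] at hbsum
    exact zero_ne_one hbsum
  have hkey := couplingsRank_eq r a b (fun i => (hapos i).le) hasum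
  -- nonemptiness
  have hne : (couplingsRank a b r).Nonempty := by
    refine ⟨Matrix.vecMulVec a b, ⟨fun i j => mul_nonneg (hapos i).le (hbpos j).le,
      fun i => ?_, fun j => ?_⟩, ?_⟩
    · simp only [Matrix.vecMulVec_apply]
      rw [← Finset.mul_sum, hbsum, mul_one]
    · simp only [Matrix.vecMulVec_apply]
      rw [← Finset.sum_mul, hasum, one_mul]
    · obtain ⟨q, hq1, f, hf, hsum⟩ := exists_decomp (fun _ : Fin 1 => a) (fun _ : Fin 1 => b)
        (fun _ i => (hapos i).le) (fun _ j => (hbpos j).le)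
      have hsum' : Matrix.vecMulVec a b = ∑ i, f i := by
        rw [← hsum, Fin.sum_univ_one]
      refine le_trans (Nat.sInf_le ⟨f, hf, hsum'⟩) (le_trans ?_ hr)
      simpa using hq1
  have hcomp : IsCompact (couplingsRank a b r) := by
    rw [hkey]
    exact ((isCompact_cubeSet n m r).image continuous_phiMap).inter_left
      (isClosed_couplings a b)
  refine ⟨hne, hcomp, fun C => ?_⟩
  obtain ⟨P, hPmem, hPmin⟩ := hcomp.exists_isMinOn hne
    (continuous_frob C).continuousOn
  exact ⟨P, hPmem, fun P' hP' => isMinOn_iff.mp hPmin P' hP'⟩
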